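/- Let k be a positive integer and let P : Fin k → ℝ be nonnegative reals sorted in non-decreasing order (P i ≤ P j whenever i ≤ j). Define S i = P i + 2 * ∑_{j < i} P j. Then ∑_{i} S i ≤ k * (∑_{i} P i). -/
import Mathlib

theorem sum_shelled_le (k : ℕ) (hk : 0 < k) (P : Fin k → ℝ)
    (hnn : ∀ i, 0 ≤ P i) (hmono : ∀ i j : Fin k, i ≤ j → P i ≤ P j) :
    ∑ i : Fin k, (P i + 2 * ∑ j ∈ Finset.Iio i, P j) ≤ (k : ℝ) * ∑ i : Fin k, P i := by
  have swap : ∑ i : Fin k, ∑ j ∈ Finset.Iio i, P j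
      = ∑ j : Fin k, ∑ _i ∈ Finset.Ioi j, P j := by
    rw [Finset.sum_comm' (s' := fun j => Finset.Ioi j) (t' := Finset.univ)
      (fun i j => by simp [Finset.mem_Iio, Finset.mem_Ioi])]
  have hub : ∑ i : Fin k, ∑ j ∈ Finset.Iio i, P j
      ≤ ∑ i : Fin k, ((Finset.Iio i).card : ℝ) * P i := by
    apply Finset.sum_le_sum
    intro i _
    calc ∑ j ∈ Finset.Iio i, P j ≤ ∑ _j ∈ Finset.Iio i, P i :=
          Finset.sum_le_sum (fun j hj => hmono j i (le_of_lt (Finset.mem_Iio.mp hj)))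
      _ = ((Finset.Iio i).card : ℝ) * P i := by
          rw [Finset.sum_const, nsmul_eq_mul]
  have key : 2 * ∑ i : Fin k, ∑ j ∈ Finset.Iio i, P j
      ≤ ((k : ℝ) - 1) * ∑ i : Fin k, P i := by
    have h2 : ∑ i : Fin k, ∑ j ∈ Finset.Iio i, P j
        = ∑ i : Fin k, ((Finset.Ioi i).card : ℝ) * P i := by
      rw [swap]
      refine Finset.sum_congr rfl fun i _ => ?_
      rw [Finset.sum_const, nsmul_eq_mul]
    calc 2 * ∑ i : Fin k, ∑ j ∈ Finset.Iio i, P j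
        = (∑ i : Fin k, ∑ j ∈ Finset.Iio i, P j)
          + ∑ i : Fin k, ((Finset.Ioi i).card : ℝ) * P i := by rw [← h2]; ring
      _ ≤ (∑ i : Fin k, ((Finset.Iio i).card : ℝ) * P i)
          + ∑ i : Fin k, ((Finset.Ioi i).card : ℝ) * P i := by linarith
      _ = ∑ i : Fin k, (((Finset.Iio i).card : ℝ) + ((Finset.Ioi i).card : ℝ)) * P i := by
          rw [← Finset.sum_add_distrib]; exact Finset.sum_congr rfl fun i _ => by ring
      _ = ∑ i : Fin k, ((k : ℝ) - 1) * P i := by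
          refine Finset.sum_congr rfl fun i _ => ?_
          have : (Finset.Iio i).card + (Finset.Ioi i).card = k - 1 := by
            rw [Fin.card_Iio, Fin.card_Ioi]
            omega
          have h' : ((Finset.Iio i).card : ℝ) + ((Finset.Ioi i).card : ℝ) = (k : ℝ) - 1 := by
            have := congrArg (Nat.cast (R := ℝ)) this
            push_cast [Nat.cast_sub hk] at this
            linarith
          rw [h']
      _ = ((k : ℝ) - 1) * ∑ i : Fin k, P i := by rw [Finset.mul_sum]
  rw [Finset.sum_add_distrib]
  have : ∑ i : Fin k, 2 * ∑ j ∈ Finset.Iio i, P j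
      = 2 * ∑ i : Fin k, ∑ j ∈ Finset.Iio i, P j := by rw [Finset.mul_sum]
  rw [this]
  nlinarith [key]
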